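/- arXiv:0712.1344 — 4 statements merged into one kernel-verified Lean document; each statement's English description precedes it below -/
import Mathlib

section
/- For the Curie-Weiss partition function Z_N(β) = Σ_σ exp((βN/2) m(σ)²), for every β ≥ 0 and N ≥ 1: (1/N) ln Z_N(β) ≤ (1/N) ln(N+1) + sup_{M ∈ [-1,1]} { ln 2 + ln cosh(βM) - (β/2) M² }. -/
open Real

noncomputable def spin (b : Bool) : ℝ := if b then 1 else -1

noncomputable def mag (N : ℕ) (σ : Fin N → Bool) : ℝ :=
  (1 / (N : ℝ)) * ∑ i : Fin N, spin (σ i)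

noncomputable def Zcw (N : ℕ) (β : ℝ) : ℝ :=
  ∑ σ : Fin N → Bool, Real.exp (β * N / 2 * (mag N σ) ^ 2)

lemma cosh_le_exp_abs (x : ℝ) : Real.cosh x ≤ Real.exp |x| := by
  rw [Real.cosh_eq]
  have h1 : Real.exp x ≤ Real.exp |x| := Real.exp_le_exp.2 (le_abs_self x)
  have h2 : Real.exp (-x) ≤ Real.exp |x| := Real.exp_le_exp.2 (neg_le_abs x)
  linarith

lemma log_cosh_le_abs (x : ℝ) : Real.log (Real.cosh x) ≤ |x| := by
  calc Real.log (Real.cosh x) ≤ Real.log (Real.exp |x|) :=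
        Real.log_le_log (Real.cosh_pos x) (cosh_le_exp_abs x)
    _ = |x| := Real.log_exp _

lemma sum_exp_linear (N : ℕ) (c : ℝ) :
    ∑ σ : Fin N → Bool, Real.exp (∑ i, c * spin (σ i)) = (2 * Real.cosh c) ^ N := by
  simp_rw [Real.exp_sum]
  rw [← Fintype.piFinset_univ]
  rw [← Finset.prod_univ_sum (fun _ : Fin N => (Finset.univ : Finset Bool))
      (fun _ b => Real.exp (c * spin b))]
  have : ∑ b : Bool, Real.exp (c * spin b) = 2 * Real.cosh c := by
    rw [Fintype.sum_bool]
    simp [spin, Real.cosh_eq]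
    ring
  rw [this, Finset.prod_const, Finset.card_univ, Fintype.card_fin]

lemma sum_spin (N : ℕ) (σ : Fin N → Bool) :
    ∑ i, spin (σ i) = 2 * ((Finset.univ.filter (fun i => σ i = true)).card : ℝ) - N := by
  have h : ∀ b : Bool, spin b = 2 * (if b = true then (1:ℝ) else 0) - 1 := by
    intro b; cases b <;> simp [spin] <;> norm_num
  simp_rw [h, Finset.sum_sub_distrib, ← Finset.mul_sum, Finset.sum_boole, Finset.sum_const,
    Finset.card_univ, Fintype.card_fin, nsmul_eq_mul, mul_one]

theorem pressure_upper_bound (N : ℕ) (hN : 1 ≤ N) (β : ℝ) (hβ : 0 ≤ β) :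
    (1 / (N : ℝ)) * Real.log (Zcw N β) ≤
      (1 / (N : ℝ)) * Real.log (N + 1) +
        ⨆ M : Set.Icc (-1 : ℝ) 1,
          (Real.log 2 + Real.log (Real.cosh (β * (M : ℝ))) - (β / 2) * (M : ℝ) ^ 2) := by
  have hNpos : (0:ℝ) < N := by exact_mod_cast hN
  set F : ℝ → ℝ := fun M => Real.log 2 + Real.log (Real.cosh (β * M)) - (β / 2) * M ^ 2 with hF
  set S : ℝ := ⨆ M : Set.Icc (-1 : ℝ) 1, F (M : ℝ) with hSdef
  -- boundedness
  have hbdd : BddAbove (Set.range fun M : Set.Icc (-1:ℝ) 1 => F (M : ℝ)) := by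
    refine ⟨Real.log 2 + β, ?_⟩
    rintro _ ⟨⟨M, hM⟩, rfl⟩
    have h1 : Real.log (Real.cosh (β * M)) ≤ β := by
      calc Real.log (Real.cosh (β * M)) ≤ |β * M| := log_cosh_le_abs _
        _ = β * |M| := by rw [abs_mul, abs_of_nonneg hβ]
        _ ≤ β * 1 := by
            apply mul_le_mul_of_nonneg_left _ hβ
            rw [abs_le]; exact ⟨hM.1, hM.2⟩
        _ = β := mul_one β
    have h2 : 0 ≤ (β / 2) * M ^ 2 := by positivity
    simp only [hF]; linarith
  have hS : ∀ M : ℝ, M ∈ Set.Icc (-1:ℝ) 1 → F M ≤ S := fun M hM =>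
    le_ciSup hbdd (⟨M, hM⟩ : Set.Icc (-1:ℝ) 1)
  -- key bound
  have key : Zcw N β ≤ (N + 1) * Real.exp (N * S) := by
    have hmaps : ∀ σ ∈ (Finset.univ : Finset (Fin N → Bool)),
        (Finset.univ.filter (fun i => σ i = true)).card ∈ Finset.range (N + 1) := by
      intro σ _
      rw [Finset.mem_range, Nat.lt_succ_iff]
      calc (Finset.univ.filter (fun i => σ i = true)).card ≤ Finset.univ.card :=
            Finset.card_filter_le _ _
        _ = N := by rw [Finset.card_univ, Fintype.card_fin]
    have hsplit : Zcw N β = ∑ k ∈ Finset.range (N + 1),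
        ∑ σ ∈ Finset.univ.filter
            (fun σ : Fin N → Bool => (Finset.univ.filter (fun i => σ i = true)).card = k),
          Real.exp (β * N / 2 * (mag N σ) ^ 2) := by
      rw [Zcw, ← Finset.sum_fiberwise_of_maps_to hmaps]
    rw [hsplit]
    have hinner : ∀ k ∈ Finset.range (N + 1),
        (∑ σ ∈ Finset.univ.filter
            (fun σ : Fin N → Bool => (Finset.univ.filter (fun i => σ i = true)).card = k),
          Real.exp (β * N / 2 * (mag N σ) ^ 2)) ≤ Real.exp (N * S) := by
      intro k hk
      rw [Finset.mem_range, Nat.lt_succ_iff] at hk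
      set Mk : ℝ := (2 * k - N) / N with hMkdef
      have hMk : Mk ∈ Set.Icc (-1:ℝ) 1 := by
        constructor
        · rw [le_div_iff₀ hNpos]
          have : (0:ℝ) ≤ k := by positivity
          linarith
        · rw [div_le_one hNpos]
          have : (k:ℝ) ≤ N := by exact_mod_cast hk
          linarith
      -- on the fiber, mag = Mk
      have hmag : ∀ σ : Fin N → Bool,
          (Finset.univ.filter (fun i => σ i = true)).card = k → mag N σ = Mk := by
        intro σ hσ
        rw [mag, sum_spin, hσ, hMkdef]
        field_simp
      -- rewrite each term
      have hterm : ∀ σ ∈ Finset.univ.filter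
            (fun σ : Fin N → Bool => (Finset.univ.filter (fun i => σ i = true)).card = k),
          Real.exp (β * N / 2 * (mag N σ) ^ 2)
            = Real.exp (-(β * N / 2 * Mk ^ 2)) * Real.exp (∑ i, (β * Mk) * spin (σ i)) := by
        intro σ hσ
        rw [Finset.mem_filter] at hσ
        have hm := hmag σ hσ.2
        rw [← Real.exp_add]
        congr 1
        have hNmag : (N:ℝ) * mag N σ = ∑ i, spin (σ i) := by
          rw [mag]; field_simp
        have hsum : ∑ i, (β * Mk) * spin (σ i) = (β * Mk) * (N * mag N σ) := by
          rw [hNmag, Finset.mul_sum]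
        rw [hsum, hm]; ring
      rw [Finset.sum_congr rfl hterm, ← Finset.mul_sum]
      have hsub : (∑ σ ∈ Finset.univ.filter
            (fun σ : Fin N → Bool => (Finset.univ.filter (fun i => σ i = true)).card = k),
          Real.exp (∑ i, (β * Mk) * spin (σ i)))
          ≤ ∑ σ : Fin N → Bool, Real.exp (∑ i, (β * Mk) * spin (σ i)) :=
        Finset.sum_le_sum_of_subset_of_nonneg (Finset.filter_subset _ _)
          (fun _ _ _ => (Real.exp_pos _).le)
      calc Real.exp (-(β * N / 2 * Mk ^ 2)) *
            (∑ σ ∈ Finset.univ.filter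
              (fun σ : Fin N → Bool => (Finset.univ.filter (fun i => σ i = true)).card = k),
              Real.exp (∑ i, (β * Mk) * spin (σ i)))
          ≤ Real.exp (-(β * N / 2 * Mk ^ 2)) *
              ∑ σ : Fin N → Bool, Real.exp (∑ i, (β * Mk) * spin (σ i)) :=
            mul_le_mul_of_nonneg_left hsub (Real.exp_pos _).le
        _ = Real.exp (N * F Mk) := by
            rw [sum_exp_linear]
            rw [hF]
            have hcosh : (0:ℝ) < Real.cosh (β * Mk) := Real.cosh_pos _
            rw [show (N:ℝ) * (Real.log 2 + Real.log (Real.cosh (β * Mk)) - β / 2 * Mk ^ 2)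
                = (N:ℝ) * (Real.log (2 * Real.cosh (β * Mk))) + (-(β * N / 2 * Mk ^ 2)) by
              rw [Real.log_mul (by norm_num) hcosh.ne']; ring]
            rw [Real.exp_add, ← Real.log_pow, Real.exp_log (by positivity)]
            ring
        _ ≤ Real.exp (N * S) := by
            apply Real.exp_le_exp.2
            exact mul_le_mul_of_nonneg_left (hS Mk hMk) hNpos.le
    calc (∑ k ∈ Finset.range (N + 1), ∑ σ ∈ Finset.univ.filter
            (fun σ : Fin N → Bool => (Finset.univ.filter (fun i => σ i = true)).card = k),
          Real.exp (β * N / 2 * (mag N σ) ^ 2))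
        ≤ ∑ k ∈ Finset.range (N + 1), Real.exp (N * S) := Finset.sum_le_sum hinner
      _ = (N + 1) * Real.exp (N * S) := by
          rw [Finset.sum_const, Finset.card_range, nsmul_eq_mul]; push_cast; ring
  -- take logs
  have hZpos : 0 < Zcw N β := by
    apply Finset.sum_pos (fun _ _ => Real.exp_pos _)
    exact Finset.univ_nonempty
  have hlog : Real.log (Zcw N β) ≤ Real.log (N + 1) + N * S := by
    calc Real.log (Zcw N β) ≤ Real.log ((N + 1) * Real.exp (N * S)) :=
          Real.log_le_log hZpos key
      _ = Real.log (N + 1) + N * S := by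
          rw [Real.log_mul (by positivity) (Real.exp_pos _).ne', Real.log_exp]
  calc (1 / (N : ℝ)) * Real.log (Zcw N β)
      ≤ (1 / (N : ℝ)) * (Real.log (N + 1) + N * S) := by
        apply mul_le_mul_of_nonneg_left hlog (by positivity)
    _ = (1 / (N : ℝ)) * Real.log (N + 1) + S := by
        field_simp
end

section
/- The thermodynamic limit of the Curie-Weiss pressure exists and equals the variational expression: lim_{N→∞} (1/N) ln Z_N(β) = sup_{M ∈ [-1,1]} { ln 2 + ln cosh(βM) - (β/2) M² } for every β ≥ 0. -/
open Real Filter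

noncomputable def gfun (β M : ℝ) : ℝ :=
  Real.log 2 + Real.log (Real.cosh (β * M)) - (β / 2) * M ^ 2

lemma sum_exp_spin (N : ℕ) (c : ℝ) :
    ∑ σ : Fin N → Bool, Real.exp (c * ∑ i : Fin N, spin (σ i))
      = (2 * Real.cosh c) ^ N := by
  have h1 : ∀ σ : Fin N → Bool, Real.exp (c * ∑ i : Fin N, spin (σ i))
      = ∏ i : Fin N, Real.exp (c * spin (σ i)) := by
    intro σ; rw [Finset.mul_sum, Real.exp_sum]
  simp_rw [h1]
  rw [← Fintype.sum_pow (fun b => Real.exp (c * spin b)) N]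
  congr 1
  rw [Fintype.sum_bool]
  simp [spin, Real.cosh_eq]
  ring

lemma sum_exp_eq (β M : ℝ) (N : ℕ) :
    ∑ σ : Fin N → Bool,
        Real.exp (β * M * (∑ i : Fin N, spin (σ i)) - N * (β / 2) * M ^ 2)
      = Real.exp (N * gfun β M) := by
  have hc : (0 : ℝ) < 2 * Real.cosh (β * M) := by positivity
  simp_rw [Real.exp_sub, ← Finset.sum_div, sum_exp_spin N (β * M)]
  have h2 : (2 * Real.cosh (β * M)) ^ N
      = Real.exp ((N : ℝ) * (Real.log 2 + Real.log (Real.cosh (β * M)))) := by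
    rw [← Real.log_mul two_ne_zero (Real.cosh_pos _).ne', Real.exp_nat_mul, Real.exp_log hc]
  rw [h2, ← Real.exp_sub]
  congr 1
  simp [gfun]; ring

lemma spin_sum_grid (N : ℕ) (σ : Fin N → Bool) :
    ∃ k : ℕ, k ≤ N ∧ ∑ i : Fin N, spin (σ i) = 2 * k - N := by
  classical
  refine ⟨(Finset.univ.filter fun i => σ i).card, (Finset.card_filter_le _ _).trans_eq
    (by simp), ?_⟩
  have h : ∀ b : Bool, spin b = 2 * (if b then (1 : ℝ) else 0) - 1 := by
    intro b; cases b <;> norm_num [spin]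
  simp_rw [h]
  rw [Finset.sum_sub_distrib, ← Finset.mul_sum, Finset.sum_boole, Finset.sum_const]
  simp

lemma Zcw_pos (N : ℕ) (β : ℝ) : 0 < Zcw N β :=
  Finset.sum_pos (fun _ _ => Real.exp_pos _) Finset.univ_nonempty

/-- lower bound: Z ≥ exp(N g(M)) for every M -/
lemma Zcw_lower (β : ℝ) (hβ : 0 ≤ β) (N : ℕ) (M : ℝ) :
    Real.exp (N * gfun β M) ≤ Zcw N β := by
  rw [← sum_exp_eq β M N, Zcw]
  apply Finset.sum_le_sum
  intro σ _
  apply Real.exp_le_exp.2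
  rcases Nat.eq_zero_or_pos N with h0 | hN
  · subst h0; simp [mag]
  · have hNR : (0 : ℝ) < N := by exact_mod_cast hN
    set s := ∑ i : Fin N, spin (σ i) with hs
    have hm : mag N σ = s / N := by rw [mag, one_div, inv_mul_eq_div]
    rw [hm]
    have key : 0 ≤ β / (2 * N) * (s - N * M) ^ 2 := by positivity
    field_simp
    nlinarith [sq_nonneg (s - N * M), mul_nonneg hβ (sq_nonneg (s - N * M)), hNR]

lemma Zcw_upper (β : ℝ) (hβ : 0 ≤ β) (N : ℕ) (hN : 1 ≤ N) :
    Zcw N β ≤ ∑ k ∈ Finset.range (N + 1),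
      Real.exp (N * gfun β ((2 * k - N) / N)) := by
  have hNR : (0 : ℝ) < N := by exact_mod_cast hN
  have step : ∀ σ : Fin N → Bool,
      Real.exp (β * N / 2 * (mag N σ) ^ 2) ≤
        ∑ k ∈ Finset.range (N + 1),
          Real.exp (β * ((2 * k - N) / N) * (∑ i : Fin N, spin (σ i))
            - N * (β / 2) * ((2 * k - N) / N) ^ 2) := by
    intro σ
    obtain ⟨k, hk, hs⟩ := spin_sum_grid N σ
    have hmem : k ∈ Finset.range (N + 1) := Finset.mem_range.2 (Nat.lt_succ_of_le hk)
    have heq : Real.exp (β * N / 2 * (mag N σ) ^ 2)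
        = Real.exp (β * ((2 * k - N) / N) * (∑ i : Fin N, spin (σ i))
            - N * (β / 2) * ((2 * k - N) / N) ^ 2) := by
      congr 1
      rw [mag, hs]
      field_simp
      ring
    rw [heq]
    exact Finset.single_le_sum (f := fun x : ℕ => Real.exp (β * ((2 * (x : ℝ) - N) / N)
      * (∑ i : Fin N, spin (σ i)) - N * (β / 2) * ((2 * (x : ℝ) - N) / N) ^ 2))
      (fun i _ => (Real.exp_pos _).le) hmem
  calc Zcw N β ≤ ∑ σ : Fin N → Bool, ∑ k ∈ Finset.range (N + 1),
        Real.exp (β * ((2 * k - N) / N) * (∑ i : Fin N, spin (σ i))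
          - N * (β / 2) * ((2 * k - N) / N) ^ 2) :=
      Finset.sum_le_sum fun σ _ => step σ
    _ = ∑ k ∈ Finset.range (N + 1), ∑ σ : Fin N → Bool,
        Real.exp (β * ((2 * k - N) / N) * (∑ i : Fin N, spin (σ i))
          - N * (β / 2) * ((2 * k - N) / N) ^ 2) := Finset.sum_comm
    _ = ∑ k ∈ Finset.range (N + 1), Real.exp (N * gfun β ((2 * k - N) / N)) := by
      refine Finset.sum_congr rfl fun k _ => sum_exp_eq β _ N

lemma gfun_bdd (β : ℝ) (M : ℝ) (hβ : 0 ≤ β) (hM : M ∈ Set.Icc (-1 : ℝ) 1) :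
    gfun β M ≤ Real.log 2 + β ^ 2 / 2 := by
  have h1 : Real.log (Real.cosh (β * M)) ≤ (β * M) ^ 2 / 2 := by
    calc Real.log (Real.cosh (β * M)) ≤ Real.log (Real.exp ((β * M) ^ 2 / 2)) :=
        Real.log_le_log (Real.cosh_pos _) (Real.cosh_le_exp_half_sq _)
      _ = (β * M) ^ 2 / 2 := Real.log_exp _
  have hM2 : M ^ 2 ≤ 1 := by nlinarith [hM.1, hM.2]
  have : (β * M) ^ 2 ≤ β ^ 2 := by nlinarith [sq_nonneg β]
  have h2 : 0 ≤ (β / 2) * M ^ 2 := by positivity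
  unfold gfun; nlinarith

lemma bddAbove_gfun (β : ℝ) (hβ : 0 ≤ β) :
    BddAbove (Set.range fun M : Set.Icc (-1 : ℝ) 1 => gfun β M) := by
  refine ⟨Real.log 2 + β ^ 2 / 2, ?_⟩
  rintro x ⟨M, rfl⟩
  exact gfun_bdd β M hβ M.2

lemma log_succ_div_tendsto :
    Tendsto (fun N : ℕ => 1 / (N : ℝ) * Real.log (N + 1)) atTop (nhds 0) := by
  have h := Real.tendsto_pow_log_div_mul_add_atTop 1 (-1) 1 one_ne_zero
  have hc : Tendsto (fun N : ℕ => ((N : ℝ) + 1)) atTop atTop :=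
    tendsto_atTop_add_const_right _ 1 tendsto_natCast_atTop_atTop
  have h2 := h.comp hc
  refine h2.congr fun N => ?_
  simp only [Function.comp]
  rw [pow_one]
  ring_nf

theorem thermodynamic_limit (β : ℝ) (hβ : 0 ≤ β) :
    Filter.Tendsto (fun N : ℕ => (1 / (N : ℝ)) * Real.log (Zcw N β)) Filter.atTop
      (nhds (⨆ M : Set.Icc (-1 : ℝ) 1,
        (Real.log 2 + Real.log (Real.cosh (β * (M : ℝ))) - (β / 2) * (M : ℝ) ^ 2))) := by
  have hrw : (⨆ M : Set.Icc (-1 : ℝ) 1,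
      (Real.log 2 + Real.log (Real.cosh (β * (M : ℝ))) - (β / 2) * (M : ℝ) ^ 2))
      = ⨆ M : Set.Icc (-1 : ℝ) 1, gfun β M := rfl
  rw [hrw]
  haveI : Nonempty (Set.Icc (-1 : ℝ) 1) := ⟨⟨0, by norm_num⟩⟩
  set S := ⨆ M : Set.Icc (-1 : ℝ) 1, gfun β M with hS
  have hbdd := bddAbove_gfun β hβ
  -- lower bound, N ≥ 1
  have hlow : ∀ N : ℕ, 1 ≤ N → S ≤ 1 / (N : ℝ) * Real.log (Zcw N β) := by
    intro N hN
    have hNR : (0 : ℝ) < N := by exact_mod_cast hN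
    refine ciSup_le fun M => ?_
    have h1 : Real.exp (N * gfun β M) ≤ Zcw N β := Zcw_lower β hβ N M
    have h2 : (N : ℝ) * gfun β M ≤ Real.log (Zcw N β) := by
      rw [← Real.log_exp ((N : ℝ) * gfun β M)]
      exact Real.log_le_log (Real.exp_pos _) h1
    rw [one_div, inv_mul_eq_div]
    exact (le_div_iff₀' hNR).2 h2
  -- upper bound
  have hup : ∀ N : ℕ, 1 ≤ N →
      1 / (N : ℝ) * Real.log (Zcw N β) ≤ 1 / (N : ℝ) * Real.log (N + 1) + S := by
    intro N hN
    have hNR : (0 : ℝ) < N := by exact_mod_cast hN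
    have hle : Zcw N β ≤ (N + 1 : ℝ) * Real.exp (N * S) := by
      refine (Zcw_upper β hβ N hN).trans ?_
      have : ∀ k ∈ Finset.range (N + 1),
          Real.exp ((N : ℝ) * gfun β ((2 * k - N) / N)) ≤ Real.exp ((N : ℝ) * S) := by
        intro k hk
        have hkN : (k : ℝ) ≤ N := by exact_mod_cast Nat.lt_succ_iff.1 (Finset.mem_range.1 hk)
        have hk0 : (0 : ℝ) ≤ k := Nat.cast_nonneg k
        have hmem : (2 * (k : ℝ) - N) / N ∈ Set.Icc (-1 : ℝ) 1 := by
          constructor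
          · rw [le_div_iff₀ hNR]; linarith
          · rw [div_le_iff₀ hNR]; linarith
        have := le_ciSup hbdd (⟨_, hmem⟩ : Set.Icc (-1 : ℝ) 1)
        exact Real.exp_le_exp.2 (mul_le_mul_of_nonneg_left this hNR.le)
      calc ∑ k ∈ Finset.range (N + 1), Real.exp ((N : ℝ) * gfun β ((2 * k - N) / N))
          ≤ ∑ _k ∈ Finset.range (N + 1), Real.exp ((N : ℝ) * S) :=
            Finset.sum_le_sum this
        _ = (N + 1 : ℝ) * Real.exp ((N : ℝ) * S) := by
            rw [Finset.sum_const, Finset.card_range]; push_cast; ring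
    have hlog : Real.log (Zcw N β) ≤ Real.log (N + 1) + N * S := by
      calc Real.log (Zcw N β) ≤ Real.log ((N + 1 : ℝ) * Real.exp (N * S)) :=
          Real.log_le_log (Zcw_pos N β) hle
        _ = Real.log (N + 1) + N * S := by
            rw [Real.log_mul (by positivity) (Real.exp_pos _).ne', Real.log_exp]
    calc 1 / (N : ℝ) * Real.log (Zcw N β)
        ≤ 1 / (N : ℝ) * (Real.log (N + 1) + N * S) := by
          apply mul_le_mul_of_nonneg_left hlog (by positivity)
      _ = 1 / (N : ℝ) * Real.log (N + 1) + S := by field_simp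
  have hupper : Tendsto (fun N : ℕ => 1 / (N : ℝ) * Real.log (N + 1) + S) atTop (nhds S) := by
    have := log_succ_div_tendsto.add tendsto_const_nhds (b := S)
    simpa using this
  refine tendsto_of_tendsto_of_tendsto_of_le_of_le' (tendsto_const_nhds) hupper ?_ ?_
  · filter_upwards [eventually_ge_atTop 1] with N hN using hlow N hN
  · filter_upwards [eventually_ge_atTop 1] with N hN using hup N hN
end

section
/- Define the interpolating partition function Z_N(t) = Σ_σ exp(β(Nt m(σ)² + N₁(1-t) m₁(σ)² + N₂(1-t) m₂(σ)²)) for t ∈ [0,1]. Then d/dt [(1/(Nβ)) ln Z_N(t)] = ⟨ m² − (N₁/N) m₁² − (N₂/N) m₂² ⟩_t ≤ 0, where ⟨·⟩_t is the Gibbs average with weight proportional to the summand. -/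
open Real

variable (N₁ N₂ : ℕ)

noncomputable def magTot (σ : Fin (N₁ + N₂) → Bool) : ℝ :=
  (1 / ((N₁ : ℝ) + N₂)) * ∑ i : Fin (N₁ + N₂), spin (σ i)

noncomputable def mag₁ (σ : Fin (N₁ + N₂) → Bool) : ℝ :=
  (1 / (N₁ : ℝ)) * ∑ i : Fin (N₁ + N₂), if (i : ℕ) < N₁ then spin (σ i) else 0

noncomputable def mag₂ (σ : Fin (N₁ + N₂) → Bool) : ℝ :=
  (1 / (N₂ : ℝ)) * ∑ i : Fin (N₁ + N₂), if N₁ ≤ (i : ℕ) then spin (σ i) else 0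

/-- Interpolating Boltzmann weight. -/
noncomputable def w (β t : ℝ) (σ : Fin (N₁ + N₂) → Bool) : ℝ :=
  Real.exp (β * (((N₁ : ℝ) + N₂) * t * (magTot N₁ N₂ σ) ^ 2 +
    (N₁ : ℝ) * (1 - t) * (mag₁ N₁ N₂ σ) ^ 2 + (N₂ : ℝ) * (1 - t) * (mag₂ N₁ N₂ σ) ^ 2))

/-- Gibbs average with the interpolating weight. -/
noncomputable def gibbs (β t : ℝ) (F : (Fin (N₁ + N₂) → Bool) → ℝ) : ℝ :=
  (∑ σ : Fin (N₁ + N₂) → Bool, F σ * w N₁ N₂ β t σ) /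
    (∑ σ : Fin (N₁ + N₂) → Bool, w N₁ N₂ β t σ)

/-- splitting of the total spin sum -/
lemma sum_split (σ : Fin (N₁ + N₂) → Bool) :
    (∑ i : Fin (N₁ + N₂), spin (σ i)) =
      (∑ i : Fin (N₁ + N₂), if (i : ℕ) < N₁ then spin (σ i) else 0) +
      (∑ i : Fin (N₁ + N₂), if N₁ ≤ (i : ℕ) then spin (σ i) else 0) := by
  rw [← Finset.sum_add_distrib]
  refine Finset.sum_congr rfl fun i _ => ?_
  rcases lt_or_ge (i : ℕ) N₁ with h | h
  · simp [h, Nat.not_le.mpr h]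
  · simp [h, Nat.not_lt.mpr h]

lemma mag_identity (h₁ : 1 ≤ N₁) (h₂ : 1 ≤ N₂) (σ : Fin (N₁ + N₂) → Bool) :
    ((N₁ : ℝ) + N₂) * magTot N₁ N₂ σ =
      (N₁ : ℝ) * mag₁ N₁ N₂ σ + (N₂ : ℝ) * mag₂ N₁ N₂ σ := by
  have hN₁ : (N₁ : ℝ) ≠ 0 := by positivity
  have hN₂ : (N₂ : ℝ) ≠ 0 := by positivity
  have hN : ((N₁ : ℝ) + N₂) ≠ 0 := by positivity
  unfold magTot mag₁ mag₂
  rw [sum_split]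
  field_simp

lemma F_nonpos (h₁ : 1 ≤ N₁) (h₂ : 1 ≤ N₂) (σ : Fin (N₁ + N₂) → Bool) :
    (magTot N₁ N₂ σ) ^ 2 - ((N₁ : ℝ) / ((N₁ : ℝ) + N₂)) * (mag₁ N₁ N₂ σ) ^ 2 -
      ((N₂ : ℝ) / ((N₁ : ℝ) + N₂)) * (mag₂ N₁ N₂ σ) ^ 2 ≤ 0 := by
  have hN₁ : (0 : ℝ) < N₁ := by exact_mod_cast h₁
  have hN₂ : (0 : ℝ) < N₂ := by exact_mod_cast h₂
  have hN : (0 : ℝ) < (N₁ : ℝ) + N₂ := by positivity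
  have hid := mag_identity N₁ N₂ h₁ h₂ σ
  set m := magTot N₁ N₂ σ
  set a := mag₁ N₁ N₂ σ
  set b := mag₂ N₁ N₂ σ
  have hsq : (((N₁ : ℝ) + N₂) * m) ^ 2 = ((N₁ : ℝ) * a + N₂ * b) ^ 2 := by rw [hid]
  have hkey : ((N₁ : ℝ) + N₂) * m ^ 2 ≤ (N₁ : ℝ) * a ^ 2 + N₂ * b ^ 2 := by
    nlinarith [sq_nonneg (a - b), mul_pos hN₁ hN₂, hsq, hN]
  have heq : ((N₁ : ℝ) / ((N₁ : ℝ) + N₂)) * a ^ 2 + ((N₂ : ℝ) / ((N₁ : ℝ) + N₂)) * b ^ 2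
      = ((N₁ : ℝ) * a ^ 2 + N₂ * b ^ 2) / ((N₁ : ℝ) + N₂) := by ring
  have hm : m ^ 2 ≤ ((N₁ : ℝ) * a ^ 2 + N₂ * b ^ 2) / ((N₁ : ℝ) + N₂) := by
    rw [le_div_iff₀ hN]; nlinarith [hkey]
  linarith [heq ▸ hm]

theorem interpolation_derivative (h₁ : 1 ≤ N₁) (h₂ : 1 ≤ N₂) (β : ℝ) (hβ : 0 < β)
    (t : ℝ) (ht : t ∈ Set.Icc (0 : ℝ) 1) :
    HasDerivAt
      (fun s => (1 / (((N₁ : ℝ) + N₂) * β)) *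
        Real.log (∑ σ : Fin (N₁ + N₂) → Bool, w N₁ N₂ β s σ))
      (gibbs N₁ N₂ β t (fun σ => (magTot N₁ N₂ σ) ^ 2 -
        ((N₁ : ℝ) / ((N₁ : ℝ) + N₂)) * (mag₁ N₁ N₂ σ) ^ 2 -
        ((N₂ : ℝ) / ((N₁ : ℝ) + N₂)) * (mag₂ N₁ N₂ σ) ^ 2)) t ∧
    gibbs N₁ N₂ β t (fun σ => (magTot N₁ N₂ σ) ^ 2 -
        ((N₁ : ℝ) / ((N₁ : ℝ) + N₂)) * (mag₁ N₁ N₂ σ) ^ 2 -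
        ((N₂ : ℝ) / ((N₁ : ℝ) + N₂)) * (mag₂ N₁ N₂ σ) ^ 2) ≤ 0 := by
  have hN₁ : (0 : ℝ) < N₁ := by exact_mod_cast h₁
  have hN₂ : (0 : ℝ) < N₂ := by exact_mod_cast h₂
  have hN : (0 : ℝ) < (N₁ : ℝ) + N₂ := by positivity
  set F : (Fin (N₁ + N₂) → Bool) → ℝ := fun σ => (magTot N₁ N₂ σ) ^ 2 -
        ((N₁ : ℝ) / ((N₁ : ℝ) + N₂)) * (mag₁ N₁ N₂ σ) ^ 2 -
        ((N₂ : ℝ) / ((N₁ : ℝ) + N₂)) * (mag₂ N₁ N₂ σ) ^ 2 with hF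
  set D : (Fin (N₁ + N₂) → Bool) → ℝ := fun σ => β * (((N₁ : ℝ) + N₂) * (magTot N₁ N₂ σ) ^ 2
        - (N₁ : ℝ) * (mag₁ N₁ N₂ σ) ^ 2 - (N₂ : ℝ) * (mag₂ N₁ N₂ σ) ^ 2) with hD
  -- derivative of each weight
  have hw : ∀ σ : Fin (N₁ + N₂) → Bool,
      HasDerivAt (fun s => w N₁ N₂ β s σ) (D σ * w N₁ N₂ β t σ) t := by
    intro σ
    have heq : ∀ s, w N₁ N₂ β s σ =
        Real.exp (β * ((N₁ : ℝ) * (mag₁ N₁ N₂ σ) ^ 2 + (N₂ : ℝ) * (mag₂ N₁ N₂ σ) ^ 2)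
          + D σ * s) := by
      intro s; unfold w; rw [hD]; congr 1; ring
    have h0 : HasDerivAt (fun s : ℝ =>
        (β * ((N₁ : ℝ) * (mag₁ N₁ N₂ σ) ^ 2 + (N₂ : ℝ) * (mag₂ N₁ N₂ σ) ^ 2) + D σ * s))
        (D σ) t := by
      simpa using ((hasDerivAt_id t).const_mul (D σ)).const_add
        (β * ((N₁ : ℝ) * (mag₁ N₁ N₂ σ) ^ 2 + (N₂ : ℝ) * (mag₂ N₁ N₂ σ) ^ 2))
    have := h0.exp
    simp only [← heq] at this
    rw [mul_comm]
    exact this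
  have Zpos : 0 < ∑ σ : Fin (N₁ + N₂) → Bool, w N₁ N₂ β t σ :=
    Finset.sum_pos (fun σ _ => Real.exp_pos _) Finset.univ_nonempty
  have hZ : HasDerivAt (fun s => ∑ σ : Fin (N₁ + N₂) → Bool, w N₁ N₂ β s σ)
      (∑ σ : Fin (N₁ + N₂) → Bool, D σ * w N₁ N₂ β t σ) t :=
    HasDerivAt.fun_sum fun σ _ => hw σ
  have hlog := (hZ.log Zpos.ne').const_mul (1 / (((N₁ : ℝ) + N₂) * β))
  have hDF : ∀ σ, D σ = (((N₁ : ℝ) + N₂) * β) * F σ := by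
    intro σ; rw [hD, hF]; field_simp
  have hsum : (∑ σ : Fin (N₁ + N₂) → Bool, D σ * w N₁ N₂ β t σ)
      = (((N₁ : ℝ) + N₂) * β) * ∑ σ : Fin (N₁ + N₂) → Bool, F σ * w N₁ N₂ β t σ := by
    rw [Finset.mul_sum]
    exact Finset.sum_congr rfl fun σ _ => by rw [hDF σ, mul_assoc]
  have hNβ : (((N₁ : ℝ) + N₂) * β) ≠ 0 := by positivity
  have hgibbs : gibbs N₁ N₂ β t F =
      1 / (((N₁ : ℝ) + N₂) * β) *
        ((∑ σ : Fin (N₁ + N₂) → Bool, D σ * w N₁ N₂ β t σ) /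
          (∑ σ : Fin (N₁ + N₂) → Bool, w N₁ N₂ β t σ)) := by
    rw [hsum]; unfold gibbs; field_simp
  constructor
  · rw [hgibbs]; exact hlog
  · unfold gibbs
    apply div_nonpos_of_nonpos_of_nonneg
    · exact Finset.sum_nonpos fun σ _ =>
        mul_nonpos_of_nonpos_of_nonneg (F_nonpos N₁ N₂ h₁ h₂ σ) (Real.exp_pos _).le
    · exact Zpos.le
end

section
/- The positive solution m(β) of m = tanh(βm) scales at criticality as m(β)² / (β−1) → 3 as β → 1⁺; in particular m(β) ~ √3 · (β−1)^{1/2}, so the critical exponent of the order parameter is 1/2. -/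
open Real Filter Set Topology

private lemma tanh_hasDerivAt (x : ℝ) : HasDerivAt Real.tanh (1 - Real.tanh x ^ 2) x := by
  have h := (Real.hasDerivAt_sinh x).div (Real.hasDerivAt_cosh x) (Real.cosh_pos x).ne'
  have he : Real.tanh = Real.sinh / Real.cosh := by
    funext y; exact Real.tanh_eq_sinh_div_cosh y
  rw [he]
  refine h.congr_deriv ?_
  have h1 := Real.cosh_sq_sub_sinh_sq x
  have hc := (Real.cosh_pos x).ne'
  rw [Pi.div_apply]
  field_simp

private lemma tanh_pos' {x : ℝ} (hx : 0 < x) : 0 < Real.tanh x := by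
  rw [Real.tanh_eq_sinh_div_cosh]
  exact div_pos (Real.sinh_pos_iff.2 hx) (Real.cosh_pos x)

private lemma tanh_lt_one' (x : ℝ) : Real.tanh x < 1 := by
  rw [Real.tanh_eq_sinh_div_cosh, div_lt_one (Real.cosh_pos x)]
  exact Real.sinh_lt_cosh x

private lemma continuous_tanh' : Continuous Real.tanh :=
  continuous_iff_continuousAt.2 fun x => (tanh_hasDerivAt x).continuousAt

private lemma phi_mono : StrictMonoOn (fun t => t - Real.tanh t) (Ici (0:ℝ)) := by
  apply strictMonoOn_of_deriv_pos (convex_Ici 0)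
    (continuous_id.sub continuous_tanh').continuousOn
  intro x hx
  rw [interior_Ici] at hx
  have h : HasDerivAt (fun t => t - Real.tanh t) (1 - (1 - Real.tanh x ^ 2)) x :=
    (hasDerivAt_id x).sub (tanh_hasDerivAt x)
  simp only [id_eq, Pi.sub_def] at h ⊢
  rw [h.deriv]
  have := tanh_pos' hx
  nlinarith

private lemma tendsto_tanh_div : Tendsto (fun t => Real.tanh t / t) (𝓝[>] (0:ℝ)) (𝓝 1) := by
  have h := (tanh_hasDerivAt 0)
  rw [hasDerivAt_iff_tendsto_slope] at h
  simp only [Real.tanh_zero] at h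
  have h' : Tendsto (slope Real.tanh 0) (𝓝[>] (0:ℝ)) (𝓝 1) := by
    norm_num at h
    exact h.mono_left (nhdsWithin_mono _ fun x hx => ne_of_gt hx)
  refine h'.congr' ?_
  filter_upwards [self_mem_nhdsWithin] with x hx
  simp [slope_def_field, div_eq_div_iff (ne_of_gt (mem_Ioi.mp hx))]

private lemma tendsto_phi_div : Tendsto (fun t => (t - Real.tanh t) / t ^ 3) (𝓝[>] (0:ℝ)) (𝓝 (1/3)) := by
  apply HasDerivAt.lhopital_zero_nhdsGT
    (f' := fun t => Real.tanh t ^ 2) (g' := fun t => 3 * t ^ 2)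
  · filter_upwards with x
    have h : HasDerivAt (fun t => t - Real.tanh t) (1 - (1 - Real.tanh x ^ 2)) x :=
      (hasDerivAt_id x).sub (tanh_hasDerivAt x)
    convert h using 1; ring
  · filter_upwards with x
    simpa using hasDerivAt_pow 3 x
  · filter_upwards [self_mem_nhdsWithin] with x hx
    have hx' : (0:ℝ) < x := hx
    have : (0:ℝ) < 3 * x ^ 2 := by positivity
    exact this.ne'
  · have : Tendsto (fun t => t - Real.tanh t) (𝓝 (0:ℝ)) (𝓝 0) := by
      have := (continuous_id.sub continuous_tanh').tendsto 0
      simpa [Pi.sub_def] using this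
    exact this.mono_left nhdsWithin_le_nhds
  · have : Tendsto (fun t : ℝ => t ^ 3) (𝓝 (0:ℝ)) (𝓝 0) := by
      simpa using (continuous_pow 3).tendsto (0:ℝ)
    exact this.mono_left nhdsWithin_le_nhds
  · have h : Tendsto (fun t => (Real.tanh t / t) ^ 2 * (1/3)) (𝓝[>] (0:ℝ)) (𝓝 (1/3)) := by
      have := (tendsto_tanh_div.pow 2).mul_const (1/3 : ℝ)
      simpa using this
    refine h.congr' ?_
    filter_upwards [self_mem_nhdsWithin] with x hx
    have hx0 : x ≠ 0 := ne_of_gt hx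
    rw [div_pow]
    ring

private lemma keyF : Tendsto (fun t => Real.tanh t ^ 3 / (t - Real.tanh t)) (𝓝[>] (0:ℝ)) (𝓝 3) := by
  have h := ((tendsto_tanh_div.pow 3).div tendsto_phi_div (by norm_num))
  norm_num at h
  refine h.congr' ?_
  filter_upwards [self_mem_nhdsWithin] with x hx
  have hx0 : x ≠ 0 := ne_of_gt hx
  simp only [Pi.div_apply]
  rw [div_pow, div_div_div_cancel_right₀ (pow_ne_zero 3 hx0)]

theorem critical_scaling (m : ℝ → ℝ)
    (hm : ∀ β : ℝ, 1 < β → m β ∈ Set.Ioo (0 : ℝ) 1 ∧ m β = Real.tanh (β * m β)) :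
    Filter.Tendsto (fun β => (m β) ^ 2 / (β - 1)) (nhdsWithin 1 (Set.Ioi 1)) (nhds 3) := by
  set t : ℝ → ℝ := fun β => β * m β with ht
  have hfacts : ∀ β : ℝ, 1 < β → 0 < m β ∧ m β < 1 ∧ 0 < t β ∧ Real.tanh (t β) = m β := by
    intro β hβ
    obtain ⟨⟨h0, h1⟩, heq⟩ := hm β hβ
    exact ⟨h0, h1, mul_pos (by linarith) h0, heq.symm⟩
  -- t β → 0⁺
  have htt : Tendsto t (𝓝[>] (1:ℝ)) (𝓝[>] 0) := by
    rw [tendsto_nhdsWithin_iff]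
    constructor
    · rw [tendsto_order]
      constructor
      · intro a ha
        filter_upwards [self_mem_nhdsWithin] with β hβ
        have := (hfacts β hβ).2.2.1
        linarith
      · intro ε hε
        set ε' := min ε 1 with hε'
        have hε'0 : 0 < ε' := lt_min hε one_pos
        have hδ : 0 < ε' - Real.tanh ε' := by
          have := phi_mono (le_refl (0:ℝ)) (le_of_lt hε'0) hε'0
          simpa using this
        filter_upwards [Ioo_mem_nhdsGT (by linarith : (1:ℝ) < 1 + (ε' - Real.tanh ε'))] with β hβ
        obtain ⟨hβ1, hβ2⟩ := hβ
        obtain ⟨hm0, hm1, ht0, htanh⟩ := hfacts β hβ1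
        by_contra hcon
        push_neg at hcon
        have hεt : ε' ≤ t β := le_trans (min_le_left _ _) hcon
        have hmono := phi_mono (le_of_lt hε'0) (le_of_lt ht0)
        have h1 : ε' - Real.tanh ε' ≤ t β - Real.tanh (t β) := by
          rcases eq_or_lt_of_le hεt with h | h
          · rw [h]
          · exact le_of_lt (hmono h)
        -- t β - tanh (t β) = (β - 1) * m β ≤ β - 1
        have hid : t β - Real.tanh (t β) = (β - 1) * m β := by
          rw [htanh]; ring
        have : (β - 1) * m β ≤ β - 1 := by nlinarith
        linarith
    · filter_upwards [self_mem_nhdsWithin] with β hβ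
      exact (hfacts β hβ).2.2.1
  have hcomp := keyF.comp htt
  refine hcomp.congr' ?_
  filter_upwards [self_mem_nhdsWithin] with β hβ
  obtain ⟨hm0, hm1, ht0, htanh⟩ := hfacts β hβ
  have hid : t β - Real.tanh (t β) = (β - 1) * m β := by rw [htanh]; ring
  simp only [Function.comp_apply]
  rw [hid, htanh]
  have hb : β - 1 ≠ 0 := by intro h; simp only [Set.mem_Ioi] at hβ; linarith
  field_simp
end
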